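/- Let p be an odd prime, r ≥ 1, and suppose h(x) = x^{p^i + p^k} (with 0 ≤ i < k < 2r) is planar over F = F_{p^{2r}}. Then f₁(x) = x² + x^{2p^r} + x^{p^i+p^k} − x^{(p^i+p^k)p^r} is a planar function on F. -/

import Mathlib

def IsPlanar {F : Type*} [Field F] (f : F → F) : Prop :=
  ∀ a : F, a ≠ 0 → Function.Bijective fun x => f (x + a) - f x

theorem f1_planar
    {F : Type*} [Field F] [Fintype F] (p r i k : ℕ) (hp : p.Prime) (hodd : Odd p)
    (hr : 1 ≤ r) (hik : i < k) (hk : k < 2 * r)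
    (hcard : Fintype.card F = p ^ (2 * r))
    (hplanar : IsPlanar (fun x : F => x ^ (p ^ i + p ^ k))) :
    IsPlanar (fun x : F =>
      x ^ 2 + x ^ (2 * p ^ r) + x ^ (p ^ i + p ^ k) - x ^ ((p ^ i + p ^ k) * p ^ r)) := by
  haveI : Fact p.Prime := ⟨hp⟩
  have hp2 : p ≠ 2 := by rintro rfl; simp [Nat.odd_iff] at hodd
  -- characteristic of F is p
  have hpF : (p : F) = 0 := by
    have h := FiniteField.cast_card_eq_zero F
    rw [hcard] at h
    push_cast at h
    exact (pow_eq_zero_iff (by omega)).mp h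
  haveI hchar : CharP F p := by
    have hdvd : ringChar F ∣ p := ringChar.dvd hpF
    rcases (Nat.Prime.eq_one_or_self_of_dvd hp _ hdvd) with h1 | h1
    · exact absurd h1 CharP.ringChar_ne_one
    · rw [← h1]; exact ringChar.charP F
  haveI : ExpChar F p := .prime hp
  have h2 : (2 : F) ≠ 0 := by
    have h2' : ((2 : ℕ) : F) ≠ 0 := by
      rw [Ne, CharP.cast_eq_zero_iff F p 2]
      intro hdvd
      exact hp2 ((Nat.prime_dvd_prime_iff_eq hp Nat.prime_two).mp hdvd)
    simpa using h2'
  set φ : F →+* F := iterateFrobenius F p r with hφdef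
  have hdef : ∀ v : F, φ v = v ^ p ^ r := fun v => iterateFrobenius_def p r v
  have hinv : ∀ v : F, φ (φ v) = v := by
    intro v
    rw [hdef, hdef, ← pow_mul, ← pow_add]
    have hrr : r + r = 2 * r := by ring
    rw [hrr, ← hcard, FiniteField.pow_card]
  -- key consequence of planarity of h : no nonzero c with c^{p^k} + c^{p^i} = 0
  have hkey : ∀ c : F, c ^ p ^ k + c ^ p ^ i = 0 → c = 0 := by
    intro c hc
    have hinj := (hplanar 1 one_ne_zero).injective
    have h0 : ∀ w : F, (w + 1) ^ (p ^ i + p ^ k) - w ^ (p ^ i + p ^ k)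
        = w ^ p ^ k + w ^ p ^ i + 1 := by
      intro w
      rw [pow_add, pow_add, add_pow_char_pow, add_pow_char_pow, one_pow]
      ring
    apply hinj (a₁ := c) (a₂ := 0)
    show (c + 1) ^ (p ^ i + p ^ k) - c ^ (p ^ i + p ^ k)
        = (0 + 1) ^ (p ^ i + p ^ k) - (0 : F) ^ (p ^ i + p ^ k)
    rw [h0, h0, zero_pow (pow_pos hp.pos k).ne', zero_pow (pow_pos hp.pos i).ne']
    linear_combination hc
  intro a ha
  rw [← Finite.injective_iff_bijective]
  intro x y hxy
  dsimp only at hxy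
  have e1 : ∀ v : F, v ^ (2 * p ^ r) = φ (v ^ 2) := by
    intro v; rw [hdef, ← pow_mul]
  have e2 : ∀ v : F, v ^ ((p ^ i + p ^ k) * p ^ r) = φ (v ^ p ^ i * v ^ p ^ k) := by
    intro v; rw [hdef, ← pow_add, ← pow_mul]
  have e3 : ∀ v : F, v ^ (p ^ i + p ^ k) = v ^ p ^ i * v ^ p ^ k := fun v => pow_add v _ _
  simp only [e1, e2, e3] at hxy
  simp only [add_pow_char_pow, map_add, map_mul, map_pow, map_ofNat] at hxy
  set u := x - y with hudef
  set s : F := 2 * a * u + φ (2 * a * u) with hs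
  set t : F := (a ^ p ^ i * u ^ p ^ k + a ^ p ^ k * u ^ p ^ i)
      - φ (a ^ p ^ i * u ^ p ^ k + a ^ p ^ k * u ^ p ^ i) with ht
  have hst : s + t = 0 := by
    rw [hs, ht, hudef]
    simp only [sub_pow_char_pow, map_sub, map_add, map_mul, map_pow, map_ofNat]
    linear_combination hxy
  have hφs : φ s = s := by
    rw [hs, map_add, hinv]; ring
  have hφt : φ t = -t := by
    rw [ht, map_sub, hinv]; ring
  have hst2 : s - t = 0 := by
    have hc := congrArg φ hst
    rw [map_add, map_zero, hφs, hφt] at hc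
    linear_combination hc
  have hs0 : s = 0 := by
    have h2s : 2 * s = 0 := by linear_combination hst + hst2
    rcases mul_eq_zero.mp h2s with h | h
    · exact absurd h h2
    · exact h
  have ht0 : t = 0 := by linear_combination hst - hs0
  rw [hs] at hs0
  rw [ht] at ht0
  simp only [map_add, map_mul, map_pow, map_ofNat] at hs0 ht0
  have hu0 : u = 0 := by
    by_contra hune
    have hC : φ a ≠ 0 := by rw [hdef]; exact pow_ne_zero _ ha
    have hφab : φ a * φ u = -(a * u) := by
      have h2s : (2 : F) * (a * u + φ a * φ u) = 0 := by linear_combination hs0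
      rcases mul_eq_zero.mp h2s with h | h
      · exact absurd h h2
      · linear_combination h
    have hVQ : (φ a) ^ p ^ k * (φ u) ^ p ^ k = -(a ^ p ^ k * u ^ p ^ k) := by
      have h : (φ a * φ u) ^ p ^ k = (-(a * u)) ^ p ^ k := by rw [hφab]
      rw [mul_pow, Odd.neg_pow hodd.pow, mul_pow] at h
      exact h
    have hVP : (φ a) ^ p ^ i * (φ u) ^ p ^ i = -(a ^ p ^ i * u ^ p ^ i) := by
      have h : (φ a * φ u) ^ p ^ i = (-(a * u)) ^ p ^ i := by rw [hφab]
      rw [mul_pow, Odd.neg_pow hodd.pow, mul_pow] at h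
      exact h
    have key : (a ^ p ^ i * (φ a) ^ p ^ k + a ^ p ^ k * (φ a) ^ p ^ i)
        * ((φ a) ^ p ^ i * u ^ p ^ k + (φ a) ^ p ^ k * u ^ p ^ i) = 0 := by
      linear_combination ((φ a) ^ p ^ i * (φ a) ^ p ^ k) * ht0
        + ((φ a) ^ p ^ i * (φ a) ^ p ^ i) * hVQ
        + ((φ a) ^ p ^ k * (φ a) ^ p ^ k) * hVP
    rcases mul_eq_zero.mp key with hG | hH
    · have hcne : φ a * a⁻¹ ≠ 0 := mul_ne_zero hC (inv_ne_zero ha)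
      apply hcne
      apply hkey
      have hane : a ^ p ^ i ≠ 0 := pow_ne_zero _ ha
      have hane' : a ^ p ^ k ≠ 0 := pow_ne_zero _ ha
      rw [mul_pow, mul_pow, inv_pow, inv_pow]
      field_simp
      linear_combination hG
    · have hcne : u * (φ a)⁻¹ ≠ 0 := mul_ne_zero hune (inv_ne_zero hC)
      apply hcne
      apply hkey
      have hane : (φ a) ^ p ^ i ≠ 0 := pow_ne_zero _ hC
      have hane' : (φ a) ^ p ^ k ≠ 0 := pow_ne_zero _ hC
      rw [mul_pow, mul_pow, inv_pow, inv_pow]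
      field_simp
      linear_combination hH
  have hxy' : x - y = 0 := by rw [← hudef]; exact hu0
  exact sub_eq_zero.mp hxy'
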